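/- Let Λ be a non-degenerate lattice (finitely generated free ℤ-module with nondegenerate symmetric bilinear form) and E ⊊ Λ a proper saturated sublattice whose orthogonal complement E⊥ contains a vector x with x·x > 0. Then there exists v in Λ ⊗ ℝ with v·v > 0 such that E = {w ∈ Λ : v·w = 0}. -/

import Mathlib

open scoped TensorProduct

theorem aux_nd (Λ : Type*) [AddCommGroup Λ] [Module ℤ Λ] [Module.Free ℤ Λ] [Module.Finite ℤ Λ]
    (B : LinearMap.BilinForm ℤ Λ) (hnd : B.Nondegenerate) :
    (B.baseChange ℝ).Nondegenerate := by
  classical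
  set b := Module.Free.chooseBasis ℤ Λ with hb
  have hdet : ((LinearMap.BilinForm.toMatrix b) B).det ≠ 0 :=
    (LinearMap.BilinForm.nondegenerate_iff_det_ne_zero b).mp hnd
  set bR := Algebra.TensorProduct.basis ℝ b with hbR
  have hmat : (LinearMap.BilinForm.toMatrix bR) (B.baseChange ℝ)
      = ((LinearMap.BilinForm.toMatrix b) B).map (Int.cast : ℤ → ℝ) := by
    ext i j
    rw [LinearMap.BilinForm.toMatrix_apply, Matrix.map_apply,
      LinearMap.BilinForm.toMatrix_apply, hbR, Algebra.TensorProduct.basis_apply,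
      Algebra.TensorProduct.basis_apply, LinearMap.BilinForm.baseChange_tmul]
    simp
  apply LinearMap.BilinForm.nondegenerate_of_det_ne_zero _ bR
  rw [hmat]
  have : (((LinearMap.BilinForm.toMatrix b) B).map (Int.cast : ℤ → ℝ)).det
      = ((Int.castRingHom ℝ)) ((LinearMap.BilinForm.toMatrix b) B).det := by
    rw [RingHom.map_det]; rfl
  rw [this]
  simpa using hdet

theorem aux_inj (Q : Type*) [AddCommGroup Q] [Module ℤ Q] [Module.Free ℤ Q]
    (q : Q) (h : (1 : ℝ) ⊗ₜ[ℤ] q = 0) : q = 0 := by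
  classical
  set c := Module.Free.chooseBasis ℤ Q with hc
  set cR := Algebra.TensorProduct.basis ℝ c with hcR
  have := congrArg cR.repr h
  rw [Algebra.TensorProduct.basis_repr_tmul, map_zero, one_smul] at this
  have h2 : ∀ i, ((c.repr q) i : ℝ) = 0 := by
    intro i
    have := congrArg (fun f => f i) this
    simpa using this
  have h3 : c.repr q = 0 := by
    ext i
    exact_mod_cast h2 i
  simpa using congrArg c.repr.symm h3

theorem aux_sat' (Λ : Type*) [AddCommGroup Λ] [Module ℤ Λ]
    (E : Submodule ℤ Λ)
    (Q : Type*) [AddCommGroup Q] [Module ℤ Q] [Module.Free ℤ Q]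
    (f : Λ →ₗ[ℤ] Q) (hf : LinearMap.ker f = E)
    (w : Λ)
    (hw : (1:ℝ) ⊗ₜ[ℤ] w ∈ Submodule.span ℝ ((fun e => (1:ℝ) ⊗ₜ[ℤ] e) '' (E : Set Λ))) :
    w ∈ E := by
  have hker : Submodule.span ℝ ((fun e => (1:ℝ) ⊗ₜ[ℤ] e) '' (E : Set Λ))
      ≤ LinearMap.ker (LinearMap.baseChange ℝ f) := by
    rw [Submodule.span_le]
    rintro _ ⟨e, he, rfl⟩
    simp only [SetLike.mem_coe, LinearMap.mem_ker, LinearMap.baseChange_tmul]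
    have : f e = 0 := by rw [← LinearMap.mem_ker, hf]; exact he
    rw [this, TensorProduct.tmul_zero]
  have h0 : (1:ℝ) ⊗ₜ[ℤ] (f w) = 0 := by
    have := hker hw
    rwa [LinearMap.mem_ker, LinearMap.baseChange_tmul] at this
  have : f w = 0 := aux_inj _ _ h0
  rw [← hf]; exact this

theorem aux_sat (Λ : Type*) [AddCommGroup Λ] [Module ℤ Λ]
    [Module.Free ℤ Λ] [Module.Finite ℤ Λ] (E : Submodule ℤ Λ)
    (hsat : ∀ (n : ℤ) (x : Λ), n ≠ 0 → n • x ∈ E → x ∈ E)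
    (w : Λ)
    (hw : (1:ℝ) ⊗ₜ[ℤ] w ∈ Submodule.span ℝ ((fun e => (1:ℝ) ⊗ₜ[ℤ] e) '' (E : Set Λ))) :
    w ∈ E := by
  classical
  letI : Module ℤ (Λ ⧸ E) := Submodule.Quotient.module E
  haveI : Module.IsTorsionFree ℤ (Λ ⧸ E) := by
    refine Module.IsTorsionFree.of_smul_eq_zero ?_
    rintro n q h
    by_cases hn : n = 0
    · exact Or.inl hn
    · refine Or.inr ?_
      obtain ⟨w', rfl⟩ := Submodule.Quotient.mk_surjective E q
      rw [← Submodule.Quotient.mk_smul, Submodule.Quotient.mk_eq_zero] at h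
      rw [Submodule.Quotient.mk_eq_zero]
      exact hsat n w' hn ((int_smul_eq_zsmul _ n w') ▸ h)
  haveI : Module.Finite ℤ (Λ ⧸ E) := Module.Finite.of_surjective (M := Λ) E.mkQ (Submodule.mkQ_surjective E)
  haveI : Module.Free ℤ (Λ ⧸ E) := Module.free_of_finite_type_torsion_free'
  let f : Λ →ₗ[ℤ] (Λ ⧸ E) := E.mkQ
  have hker : LinearMap.ker f = E := Submodule.ker_mkQ E
  exact aux_sat' Λ E (Λ ⧸ E) f hker w hw

set_option maxHeartbeats 1000000 in
set_option synthInstance.maxHeartbeats 1000000 in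
/-- If `Λ` is a non-degenerate lattice and `E ⊊ Λ` a proper saturated
sublattice whose orthogonal complement contains a vector of positive self-intersection,
then there is `v ∈ Λ ⊗ ℝ` with `v·v > 0` such that `E = v^⊥ ∩ Λ`. -/
theorem stmt0 (Λ : Type*) [AddCommGroup Λ] [Module ℤ Λ]
    [Module.Free ℤ Λ] [Module.Finite ℤ Λ]
    (B : LinearMap.BilinForm ℤ Λ) (hsymm : B.IsSymm) (hnd : B.Nondegenerate)
    (E : Submodule ℤ Λ) (hproper : E ≠ ⊤)
    (hsat : ∀ (n : ℤ) (x : Λ), n ≠ 0 → n • x ∈ E → x ∈ E)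
    (x : Λ) (hx : ∀ e ∈ E, B x e = 0) (hxpos : 0 < B x x) :
    ∃ v : ℝ ⊗[ℤ] Λ, 0 < (B.baseChange ℝ) v v ∧
      E = {w : Λ | (B.baseChange ℝ) v (1 ⊗ₜ w) = 0} := by
  classical
  have hndR : (B.baseChange ℝ).Nondegenerate := aux_nd Λ B hnd
  have hsymmR : (B.baseChange ℝ).IsSymm := LinearMap.BilinForm.isSymm_iff.mpr
    (LinearMap.BilinForm.IsSymm.baseChange ℝ (LinearMap.BilinForm.isSymm_iff.mp hsymm))
  have hreflR : (B.baseChange ℝ).IsRefl := hsymmR.isRefl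
  set Eℝ : Submodule ℝ (ℝ ⊗[ℤ] Λ) :=
    Submodule.span ℝ ((fun e => (1:ℝ) ⊗ₜ[ℤ] e) '' (E : Set Λ)) with hEℝ
  set W := (B.baseChange ℝ).orthogonal Eℝ with hWdef
  have hmemW : ∀ v, v ∈ W ↔ ∀ e ∈ E, (B.baseChange ℝ) v ((1:ℝ) ⊗ₜ[ℤ] e) = 0 := by
    intro v
    constructor
    · intro hv e he
      have h1 : ((1:ℝ) ⊗ₜ[ℤ] e) ∈ Eℝ := Submodule.subset_span ⟨e, he, rfl⟩
      have h2 := hv _ h1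
      have h3 := (LinearMap.BilinForm.isSymm_iff.mp hsymmR).eq ((1:ℝ) ⊗ₜ[ℤ] e) v
      simp only [RingHom.id_apply] at h3
      rw [← h3]
      exact h2
    · intro h u hu
      induction hu using Submodule.span_induction with
      | mem u hu =>
        obtain ⟨e, he, rfl⟩ := hu
        have h3 := (LinearMap.BilinForm.isSymm_iff.mp hsymmR).eq ((1:ℝ) ⊗ₜ[ℤ] e) v
        simp only [RingHom.id_apply] at h3
        show (B.baseChange ℝ) _ v = 0
        rw [h3]
        exact h e he
      | zero => simp [LinearMap.BilinForm.IsOrtho]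
      | add u1 u2 _ _ h1 h2 =>
        show (B.baseChange ℝ) _ v = 0
        rw [map_add, LinearMap.add_apply, h1, h2, add_zero]
      | smul a u _ h1 =>
        show (B.baseChange ℝ) _ v = 0
        rw [map_smul, LinearMap.smul_apply, h1, smul_zero]
  have hx'W : ((1:ℝ) ⊗ₜ[ℤ] x) ∈ W := (hmemW _).mpr (fun e he => by
      rw [LinearMap.BilinForm.baseChange_tmul, hx e he, zero_smul])
  have hx'pos : 0 < (B.baseChange ℝ) ((1:ℝ) ⊗ₜ[ℤ] x) ((1:ℝ) ⊗ₜ[ℤ] x) := by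
    rw [LinearMap.BilinForm.baseChange_tmul]
    rw [mul_one, zsmul_eq_mul, mul_one]
    exact_mod_cast hxpos
  -- Step C: for each w ∉ E, some element of W pairs nontrivially with it
  have hC : ∀ w : Λ, w ∉ E → ∃ v ∈ W, (B.baseChange ℝ) v ((1:ℝ) ⊗ₜ[ℤ] w) ≠ 0 := by
    intro w hw
    by_contra hcon
    push_neg at hcon
    apply hw
    apply aux_sat Λ E hsat w
    have hmem : ((1:ℝ) ⊗ₜ[ℤ] w) ∈ (B.baseChange ℝ).orthogonal W := by
      intro v hv
      exact hcon v hv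
    rwa [hWdef, LinearMap.BilinForm.orthogonal_orthogonal hndR hreflR] at hmem
  -- countability
  haveI : Countable Λ := Countable.of_equiv _ (Module.Free.chooseBasis ℤ Λ).repr.toEquiv.symm
  -- coordinates on W
  haveI : FiniteDimensional ℝ (ℝ ⊗[ℤ] Λ) := inferInstance
  haveI : FiniteDimensional ℝ ↥W := inferInstance
  haveI : Module.Free ℝ ↥W := Module.Free.of_divisionRing ℝ ↥W
  set d := Module.finrank ℝ W with hd
  let bw : Module.Basis (Fin d) ℝ W := Module.finBasis ℝ W
  let φ : (Fin d → ℝ) ≃ₗ[ℝ] W := bw.equivFun.symm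
  let ψ : (Fin d → ℝ) →ₗ[ℝ] (ℝ ⊗[ℤ] Λ) := W.subtype ∘ₗ (φ : (Fin d → ℝ) →ₗ[ℝ] W)
  have hψmem : ∀ y, ψ y ∈ W := fun y => (φ y).2
  have hψsurj : ∀ v ∈ W, ∃ y, ψ y = v := by
    intro v hv
    exact ⟨φ.symm ⟨v, hv⟩, by simp [ψ]⟩
  -- the bad subspaces
  let L : Λ → ((Fin d → ℝ) →ₗ[ℝ] ℝ) := fun w => ((B.baseChange ℝ).flip ((1:ℝ) ⊗ₜ[ℤ] w)) ∘ₗ ψ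
  have hLapp : ∀ w y, L w y = (B.baseChange ℝ) (ψ y) ((1:ℝ) ⊗ₜ[ℤ] w) := fun _ _ => rfl
  have hSne : ∀ w : Λ, w ∉ E → LinearMap.ker (L w) ≠ ⊤ := by
    intro w hw htop
    obtain ⟨v, hvW, hvne⟩ := hC w hw
    obtain ⟨y, rfl⟩ := hψsurj v hvW
    have : L w y = 0 := by
      have : y ∈ LinearMap.ker (L w) := htop ▸ Submodule.mem_top
      exact this
    rw [hLapp] at this
    exact hvne this
  have hnull : MeasureTheory.volume
      (⋃ w : {w : Λ // w ∉ E}, (LinearMap.ker (L w.1) : Set (Fin d → ℝ))) = 0 :=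
    MeasureTheory.measure_iUnion_null fun w =>
      MeasureTheory.Measure.addHaar_submodule _ _ (hSne w.1 w.2)
  -- the positivity set is open with positive measure
  let g0 : LinearMap.BilinForm ℝ (Fin d → ℝ) := (B.baseChange ℝ).compl₁₂ ψ ψ
  have hg0 : ∀ y z, g0 y z = (B.baseChange ℝ) (ψ y) (ψ z) := fun _ _ => rfl
  have hcont : Continuous fun y => g0 y y := by
    let G : (Fin d → ℝ) →ₗ[ℝ] ((Fin d → ℝ) →L[ℝ] ℝ) :=
      (LinearMap.toContinuousLinearMap :
        ((Fin d → ℝ) →ₗ[ℝ] ℝ) ≃ₗ[ℝ] ((Fin d → ℝ) →L[ℝ] ℝ)).toLinearMap ∘ₗ g0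
    have hGc : Continuous G := G.continuous_of_finiteDimensional
    have heq : (fun y => g0 y y) = fun y => (G y) y := rfl
    rw [heq]
    exact isBoundedBilinearMap_apply.continuous.comp (hGc.prodMk continuous_id)
  have hUopen : IsOpen {y : Fin d → ℝ | 0 < g0 y y} := isOpen_lt continuous_const hcont
  have hy0 : φ.symm ⟨_, hx'W⟩ ∈ {y : Fin d → ℝ | 0 < g0 y y} := by
    show 0 < g0 _ _
    rw [hg0]
    have : ψ (φ.symm ⟨_, hx'W⟩) = (1:ℝ) ⊗ₜ[ℤ] x := by simp [ψ]
    rw [this]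
    exact hx'pos
  have hUpos : 0 < MeasureTheory.volume {y : Fin d → ℝ | 0 < g0 y y} :=
    hUopen.measure_pos MeasureTheory.volume ⟨_, hy0⟩
  have hnotsub : ¬ ({y : Fin d → ℝ | 0 < g0 y y}
      ⊆ ⋃ w : {w : Λ // w ∉ E}, (LinearMap.ker (L w.1) : Set (Fin d → ℝ))) := by
    intro hsub
    have := MeasureTheory.measure_mono (μ := MeasureTheory.volume) hsub
    rw [hnull] at this
    exact absurd (lt_of_lt_of_le hUpos this) (lt_irrefl 0)
  obtain ⟨y, hyU, hyN⟩ := Set.not_subset.mp hnotsub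
  refine ⟨ψ y, ?_, ?_⟩
  · exact hyU
  · ext w
    simp only [Set.mem_setOf_eq, SetLike.mem_coe]
    constructor
    · intro hwE
      exact (hmemW (ψ y)).mp (hψmem y) w hwE
    · intro hzero
      by_contra hwE
      apply hyN
      refine Set.mem_iUnion.mpr ⟨⟨w, hwE⟩, ?_⟩
      show y ∈ LinearMap.ker (L w)
      rw [LinearMap.mem_ker, hLapp]
      exact hzero
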